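/- Let k be an infinite field and R = k[x,y] with homogeneous maximal ideal 𝔪 = (x,y). Let I and J be nonzero proper homogeneous ideals of R such that I + J is full. Then max{o(I), o(J)} ≤ o(I ∩ J) ≤ max{o(I), o(J)} + 1. -/

import Mathlib

open MvPolynomial

noncomputable section

variable {k : Type*} [Field k]

/-- An ideal of a polynomial ring is homogeneous if it contains all homogeneous
components of its elements. -/
def IsHomogeneousIdeal {σ : Type*} (I : Ideal (MvPolynomial σ k)) : Prop :=
  ∀ p ∈ I, ∀ d : ℕ, MvPolynomial.homogeneousComponent d p ∈ I

/-- The homogeneous maximal ideal `(x, y)` of `k[x,y]`. -/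
def maxIdeal (k : Type*) [Field k] : Ideal (MvPolynomial (Fin 2) k) :=
  Ideal.span {X 0, X 1}

/-- A homogeneous ideal `I ⊆ k[x,y]` is full if `(I : z) = (I : 𝔪)` for some
linear form `z`. -/
def IsFull (I : Ideal (MvPolynomial (Fin 2) k)) : Prop :=
  ∃ z : MvPolynomial (Fin 2) k, z ≠ 0 ∧ z.IsHomogeneous 1 ∧
    Submodule.colon I (Ideal.span {z}) = Submodule.colon I (maxIdeal k)

/-- The order `o(I)` of an ideal: the smallest degree of a nonzero homogeneous
element of `I`. -/
def ordDeg (I : Ideal (MvPolynomial (Fin 2) k)) : ℕ :=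
  sInf {d : ℕ | ∃ p ∈ I, p ≠ 0 ∧ MvPolynomial.IsHomogeneous p d}

namespace OrderFullProof

abbrev R2 (k : Type*) [Field k] := MvPolynomial (Fin 2) k

/-! ### Elementary facts about `Fin 2` monomials and linear forms -/

lemma fin2_degree (m : Fin 2 →₀ ℕ) : (∑ i ∈ m.support, m i) = m 0 + m 1 := by
  rw [Finset.sum_subset (Finset.subset_univ m.support)]
  · simp [Fin.sum_univ_two]
  · intro x _ hx
    simpa using (Finsupp.notMem_support_iff.mp hx)

lemma fin2_sum_eq_one {m : Fin 2 →₀ ℕ} (h : m 0 + m 1 = 1) :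
    m = Finsupp.single 0 1 ∨ m = Finsupp.single 1 1 := by
  rcases Nat.eq_zero_or_pos (m 0) with h0 | h0
  · right
    ext i
    fin_cases i <;> simp_all [Finsupp.single_apply]
  · left
    have h1 : m 0 = 1 := le_antisymm (by omega) h0
    ext i
    fin_cases i <;> simp_all [Finsupp.single_apply]

lemma linear_form_eq {z : R2 k} (hz : z.IsHomogeneous 1) :
    z = C (coeff (Finsupp.single 0 1) z) * X 0 + C (coeff (Finsupp.single 1 1) z) * X 1 := by
  classical
  apply MvPolynomial.ext
  intro m
  rw [coeff_add, coeff_C_mul, coeff_C_mul, coeff_X', coeff_X']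
  by_cases h0 : m = Finsupp.single 0 1
  · subst h0
    have hne : (Finsupp.single (1:Fin 2) 1) ≠ Finsupp.single 0 1 := by
      intro h
      have := DFunLike.congr_fun h 0
      simp [Finsupp.single_apply] at this
    simp [hne]
  · by_cases h1 : m = Finsupp.single 1 1
    · subst h1
      have hne : (Finsupp.single (0:Fin 2) 1) ≠ Finsupp.single 1 1 := by
        intro h
        have := DFunLike.congr_fun h 0
        simp [Finsupp.single_apply] at this
      simp [hne]
    · have : coeff m z = 0 := by
        apply hz.coeff_eq_zero
        intro hd
        have : m 0 + m 1 = 1 := by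
          rw [← fin2_degree m]
          simpa [Finsupp.degree_apply] using hd
        rcases fin2_sum_eq_one this with h | h
        · exact h0 h
        · exact h1 h
      rw [this, if_neg (Ne.symm h0), if_neg (Ne.symm h1)]
      simp

lemma homog_support_deg {h : R2 k} {m : ℕ} (hh : h.IsHomogeneous m) {v : Fin 2 →₀ ℕ}
    (hv : v ∈ h.support) : v 0 + v 1 = m := by
  have := hh (MvPolynomial.mem_support_iff.mp hv)
  rw [← fin2_degree v]
  rw [Finsupp.weight_apply] at this
  simpa [Finsupp.sum, mul_comm] using this

/-! ### Evaluation of homogeneous polynomials along a line -/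

lemma GEval {A : Type*} [CommRing A] [Algebra k A] (W : A) (d : Fin 2 → k) {h : R2 k} {m : ℕ}
    (hh : h.IsHomogeneous m) :
    MvPolynomial.aeval (fun i => algebraMap k A (d i) * W) h
      = algebraMap k A (eval d h) * W ^ m := by
  conv_lhs => rw [← h.support_sum_monomial_coeff]
  rw [map_sum, eval_eq', map_sum, Finset.sum_mul]
  apply Finset.sum_congr rfl
  intro v hv
  have hdeg : v 0 + v 1 = m := homog_support_deg hh hv
  rw [aeval_monomial, Finsupp.prod_fintype _ _ (fun i => pow_zero _), Fin.prod_univ_two]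
  rw [map_mul]
  simp only [mul_pow, map_pow]
  rw [← hdeg, pow_add, Fin.prod_univ_two]
  simp only [map_mul, map_pow]
  ring

lemma sub_dvd_aeval (z W : R2 k) (d : Fin 2 → k) (hdvd : ∀ i, z ∣ X i - C (d i) * W)
    (h : R2 k) : z ∣ h - MvPolynomial.aeval (fun i => C (d i) * W) h := by
  induction h using MvPolynomial.induction_on with
  | C a => simp [aeval_C, algebraMap_eq]
  | add p q hp hq =>
      rw [map_add]
      have : p + q - (MvPolynomial.aeval (fun i => C (d i) * W) p
            + MvPolynomial.aeval (fun i => C (d i) * W) q)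
          = (p - MvPolynomial.aeval (fun i => C (d i) * W) p)
            + (q - MvPolynomial.aeval (fun i => C (d i) * W) q) := by ring
      rw [this]
      exact dvd_add hp hq
  | mul_X p i hp =>
      rw [map_mul, aeval_X]
      have : p * X i - MvPolynomial.aeval (fun i => C (d i) * W) p * (C (d i) * W)
          = (p - MvPolynomial.aeval (fun i => C (d i) * W) p) * X i
            + MvPolynomial.aeval (fun i => C (d i) * W) p * (X i - C (d i) * W) := by ring
      rw [this]
      exact dvd_add (hp.mul_right _) ((hdvd i).mul_left _)

lemma GSub {z W : R2 k} {d : Fin 2 → k} (hdvd : ∀ i, z ∣ X i - C (d i) * W)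
    {h : R2 k} {m : ℕ} (hh : h.IsHomogeneous m) :
    ∃ u, h = C (eval d h) * W ^ m + z * u := by
  have h1 := sub_dvd_aeval z W d hdvd h
  have h2 : MvPolynomial.aeval (fun i => C (d i) * W) h = C (eval d h) * W ^ m := by
    have := GEval W d hh
    rw [algebraMap_eq] at this
    exact this
  rw [h2] at h1
  obtain ⟨u, hu⟩ := h1
  exact ⟨u, by linear_combination hu⟩

lemma mixW {z W : R2 k} {d : Fin 2 → k} (hdvd : ∀ i, z ∣ X i - C (d i) * W)
    {f g : R2 k} {m : ℕ} (hf : IsHomogeneous f m) (hg : IsHomogeneous g m) (hzf : ¬ z ∣ f) :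
    ∃ γ v, g = C γ * f + z * v := by
  obtain ⟨uf, huf⟩ := GSub hdvd hf
  obtain ⟨ug, hug⟩ := GSub hdvd hg
  have hcf : eval d f ≠ 0 := by
    intro h0
    rw [h0, map_zero, zero_mul, zero_add] at huf
    exact hzf ⟨uf, huf⟩
  refine ⟨eval d g / eval d f, ug - C (eval d g / eval d f) * uf, ?_⟩
  have hC : (C (eval d g / eval d f) : R2 k) * C (eval d f) = C (eval d g) := by
    rw [← C_mul, div_mul_cancel₀ _ hcf]
  calc g = C (eval d g) * W ^ m + z * ug := hug
    _ = C (eval d g / eval d f) * (C (eval d f) * W ^ m + z * uf)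
        + z * (ug - C (eval d g / eval d f) * uf) := by linear_combination (W ^ m) * hC.symm
    _ = C (eval d g / eval d f) * f + z * (ug - C (eval d g / eval d f) * uf) := by rw [← huf]

lemma mix {z f g : R2 k} (hz0 : z ≠ 0) (hz1 : z.IsHomogeneous 1) {m : ℕ}
    (hf : IsHomogeneous f m) (hg : IsHomogeneous g m) (hzf : ¬ z ∣ f) :
    ∃ γ v, g = C γ * f + z * v := by
  obtain ⟨α, β, hrep⟩ : ∃ α β, z = C α * X 0 + C β * X 1 := ⟨_, _, linear_form_eq hz1⟩
  by_cases hb : β = 0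
  · have ha : α ≠ 0 := by
      intro ha
      apply hz0
      rw [hrep, ha, hb]
      simp
    have hz' : z = C α * X 0 := by rw [hrep, hb]; simp
    have e1 : (C α : R2 k) * C α⁻¹ = 1 := by rw [← C_mul, mul_inv_cancel₀ ha, C_1]
    refine mixW (d := ![0, 1]) (W := X 1) ?_ hf hg hzf
    rw [Fin.forall_fin_two]
    constructor
    · refine ⟨C α⁻¹, ?_⟩
      simp only [Matrix.cons_val_zero, map_zero, zero_mul, sub_zero]
      rw [hz']
      linear_combination (-(X (0 : Fin 2) : R2 k)) * e1
    · simp only [Matrix.cons_val_one, Matrix.head_cons, Matrix.cons_val_zero, C_1, one_mul, sub_self]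
      exact dvd_zero z
  · have e1 : (C β : R2 k) * C β⁻¹ = 1 := by rw [← C_mul, mul_inv_cancel₀ hb, C_1]
    have e2 : (C (-(α/β)) : R2 k) = -(C β⁻¹ * C α) := by
      rw [← C_mul, ← C_neg]
      congr 1
      ring
    refine mixW (d := ![1, -(α/β)]) (W := X 0) ?_ hf hg hzf
    rw [Fin.forall_fin_two]
    constructor
    · simp only [Matrix.cons_val_zero, C_1, one_mul, sub_self]
      exact dvd_zero z
    · refine ⟨C β⁻¹, ?_⟩
      simp only [Matrix.cons_val_one, Matrix.head_cons, Matrix.cons_val_zero]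
      rw [hrep]
      linear_combination (-(X (0 : Fin 2) : R2 k)) * e2 - (X (1 : Fin 2) : R2 k) * e1

/-! ### Primality of linear forms -/

lemma prime_X1 : Prime (X 1 : R2 k) := by
  rw [← MulEquiv.prime_iff (MvPolynomial.finSuccEquiv k 1).toMulEquiv]
  have h1 : (1 : Fin 2) = Fin.succ 0 := rfl
  rw [h1]
  show Prime ((MvPolynomial.finSuccEquiv k 1) (X (Fin.succ 0)))
  rw [MvPolynomial.finSuccEquiv_X_succ]
  rw [Polynomial.prime_C_iff]
  rw [← MulEquiv.prime_iff (MvPolynomial.finSuccEquiv k 0).toMulEquiv]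
  show Prime ((MvPolynomial.finSuccEquiv k 0) (X 0))
  rw [MvPolynomial.finSuccEquiv_X_zero]
  exact Polynomial.prime_X

lemma prime_z {z : R2 k} (hz0 : z ≠ 0) (hz1 : z.IsHomogeneous 1) : Prime z := by
  obtain ⟨α, β, hrep⟩ : ∃ α β, z = C α * X 0 + C β * X 1 := ⟨_, _, linear_form_eq hz1⟩
  by_cases ha : α = 0
  · have hb : β ≠ 0 := by
      intro hb
      exact hz0 (by rw [hrep, ha, hb]; simp)
    have hz' : z = C β * X 1 := by rw [hrep, ha]; simp
    have : Associated (X 1 : R2 k) z := by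
      rw [hz']
      exact (associated_unit_mul_left _ _
        ((isUnit_iff_ne_zero.mpr hb).map (C : k →+* R2 k))).symm
    exact this.prime prime_X1
  · rw [← MulEquiv.prime_iff (MvPolynomial.finSuccEquiv k 1).toMulEquiv]
    show Prime ((MvPolynomial.finSuccEquiv k 1) z)
    have h1 : (1 : Fin 2) = Fin.succ 0 := rfl
    have hEz : (MvPolynomial.finSuccEquiv k 1) z
        = Polynomial.C (C α) * (Polynomial.X - Polynomial.C (-(C α⁻¹ * C β * X 0))) := by
      rw [hrep, map_add, map_mul, map_mul, h1, MvPolynomial.finSuccEquiv_X_succ,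
        MvPolynomial.finSuccEquiv_X_zero]
      have hCα : (MvPolynomial.finSuccEquiv k 1) (C α) = Polynomial.C (C α) := by
        simp [MvPolynomial.finSuccEquiv_apply]
      have hCβ : (MvPolynomial.finSuccEquiv k 1) (C β) = Polynomial.C (C β) := by
        simp [MvPolynomial.finSuccEquiv_apply]
      rw [hCα, hCβ]
      have hmul : (C α : MvPolynomial (Fin 1) k) * (C α⁻¹ * C β * X 0) = C β * X 0 := by
        rw [← mul_assoc, ← mul_assoc, ← C_mul, mul_inv_cancel₀ ha, C_1, one_mul]
      have key : (Polynomial.C (C α) : Polynomial (MvPolynomial (Fin 1) k))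
          * Polynomial.C (C α⁻¹ * C β * X 0) = Polynomial.C (C β) * Polynomial.C (X 0) := by
        rw [← Polynomial.C_mul, ← Polynomial.C_mul, hmul]
      rw [map_neg, sub_neg_eq_add, mul_add, key]
    rw [hEz]
    have hu : IsUnit (Polynomial.C (C α : MvPolynomial (Fin 1) k)) :=
      ((isUnit_iff_ne_zero.mpr ha).map (C : k →+* MvPolynomial (Fin 1) k)).map
        (Polynomial.C : _ →+* Polynomial (MvPolynomial (Fin 1) k))
    exact ((associated_unit_mul_left _ _ hu).symm.prime (Polynomial.prime_X_sub_C _))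

lemma prime_X0 : Prime (X 0 : R2 k) :=
  prime_z (X_ne_zero 0) (isHomogeneous_X _ _)

lemma X0_not_dvd_X1 : ¬ (X 0 : R2 k) ∣ X 1 := by
  rintro ⟨w, hw⟩
  have := congrArg (eval (fun i : Fin 2 => if i = 0 then (0 : k) else 1)) hw
  simp at this

lemma not_both_dvd {z : R2 k} (hp : Prime z) (h0 : z ∣ X 0) (h1 : z ∣ X 1) : False := by
  obtain ⟨a, ha⟩ := h0
  rcases (prime_X0.irreducible.isUnit_or_isUnit ha) with hu | hu
  · exact hp.not_unit hu
  · apply X0_not_dvd_X1 (k := k)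
    rcases hu with ⟨u, rfl⟩
    have hz : z = X 0 * ((u⁻¹ : (R2 k)ˣ) : R2 k) := by
      rw [ha, mul_assoc]
      simp
    exact dvd_trans ⟨_, hz⟩ h1

lemma pow_dvd_cancel {z : R2 k} (hp : Prime z) :
    ∀ (j : ℕ) (h : R2 k), z ^ j ∣ X 0 * h → z ^ j ∣ X 1 * h → z ^ j ∣ h := by
  intro j
  induction j with
  | zero => intro h _ _; simpa using one_dvd h
  | succ j ih =>
      intro h h0 h1
      by_cases hzh : z ∣ h
      · obtain ⟨h', rfl⟩ := hzh
        have hz0 : z ≠ 0 := hp.ne_zero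
        have d0 : z ^ j ∣ X 0 * h' := by
          have : z * z ^ j ∣ z * (X 0 * h') := by
            rw [← pow_succ']
            convert h0 using 1
            ring
          exact (mul_dvd_mul_iff_left hz0).mp this
        have d1 : z ^ j ∣ X 1 * h' := by
          have : z * z ^ j ∣ z * (X 1 * h') := by
            rw [← pow_succ']
            convert h1 using 1
            ring
          exact (mul_dvd_mul_iff_left hz0).mp this
        rw [pow_succ']
        exact mul_dvd_mul_left z (ih h' d0 d1)
      · exfalso
        have hz : z ∣ X 0 * h := dvd_trans (dvd_pow_self z (Nat.succ_ne_zero j)) h0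
        have hz' : z ∣ X 1 * h := dvd_trans (dvd_pow_self z (Nat.succ_ne_zero j)) h1
        rcases hp.dvd_mul.mp hz with hx | hh
        · rcases hp.dvd_mul.mp hz' with hy | hh
          · exact not_both_dvd hp hx hy
          · exact hzh hh
        · exact hzh hh

lemma deg_bound [Infinite k] {p z : R2 k} {m : ℕ} (hp0 : p ≠ 0) (hpm : p.IsHomogeneous m)
    (hz0 : z ≠ 0) (hz1 : z.IsHomogeneous 1) (hdvd : z ^ (m + 1) ∣ p) : False := by
  obtain ⟨c, hc⟩ : ∃ c : Fin 2 → k, eval c (z * p) ≠ 0 := by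
    by_contra hall
    push_neg at hall
    have : z * p = 0 := MvPolynomial.funext (fun x => by rw [hall x, map_zero])
    exact mul_ne_zero hz0 hp0 this
  have e1 : eval c z ≠ 0 := fun h => hc (by rw [map_mul, h, zero_mul])
  have e2 : eval c p ≠ 0 := fun h => hc (by rw [map_mul, h, mul_zero])
  set Φ := MvPolynomial.aeval (R := k)
    (fun i : Fin 2 => Polynomial.C (c i) * Polynomial.X) with hΦ
  have hΦp : Φ p = Polynomial.C (eval c p) * Polynomial.X ^ m := by
    have := GEval (A := Polynomial k) Polynomial.X c hpm
    rwa [Polynomial.algebraMap_eq] at this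
  have hΦz : Φ z = Polynomial.C (eval c z) * Polynomial.X ^ 1 := by
    have := GEval (A := Polynomial k) Polynomial.X c hz1
    rwa [Polynomial.algebraMap_eq] at this
  obtain ⟨u, hu⟩ := hdvd
  have hdvd2 : Φ z ^ (m + 1) ∣ Φ p := ⟨Φ u, by rw [hu, map_mul, map_pow]⟩
  have hne : Φ p ≠ 0 := by
    rw [hΦp]
    exact mul_ne_zero (fun h => e2 (by simpa using Polynomial.C_eq_zero.mp h))
      (pow_ne_zero _ Polynomial.X_ne_zero)
  have hle := Polynomial.natDegree_le_of_dvd hdvd2 hne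
  rw [hΦp, hΦz, pow_one, mul_pow, ← Polynomial.C_pow,
    Polynomial.natDegree_C_mul_X_pow _ _ (pow_ne_zero _ e1),
    Polynomial.natDegree_C_mul_X_pow _ _ e2] at hle
  omega

/-! ### Homogeneous components -/

lemma comp_of_homog {p : R2 k} {m : ℕ} (hp : p.IsHomogeneous m) :
    homogeneousComponent m p = p := by
  rw [homogeneousComponent_of_mem ((mem_homogeneousSubmodule _ _).mpr hp), if_pos rfl]

lemma comp_mul {w : R2 k} (hw : w.IsHomogeneous 1) (v : R2 k) (n : ℕ) :
    homogeneousComponent (n + 1) (w * v) = w * homogeneousComponent n v := by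
  conv_lhs => rw [← v.sum_homogeneousComponent, Finset.mul_sum]
  rw [map_sum]
  have step : ∀ i : ℕ, homogeneousComponent (n + 1) (w * homogeneousComponent i v)
      = if i = n then w * homogeneousComponent i v else 0 := by
    intro i
    have hmem : w * homogeneousComponent i v ∈ homogeneousSubmodule (Fin 2) k (1 + i) :=
      (mem_homogeneousSubmodule _ _).mpr (hw.mul (homogeneousComponent_isHomogeneous i v))
    rw [homogeneousComponent_of_mem hmem]
    by_cases h : i = n
    · rw [if_pos (by omega), if_pos h]
    · rw [if_neg (by omega), if_neg h]
  simp_rw [step]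
  rw [Finset.sum_ite_eq' _ n (fun i => w * homogeneousComponent i v)]
  by_cases hn : n ∈ Finset.range (v.totalDegree + 1)
  · rw [if_pos hn]
  · rw [if_neg hn]
    have : homogeneousComponent n v = 0 :=
      homogeneousComponent_eq_zero _ _ (by simpa using hn)
    rw [this, mul_zero]

lemma homog_zero_eq_C {p : R2 k} (hp : p.IsHomogeneous 0) : p = C (coeff 0 p) := by
  apply MvPolynomial.ext
  intro m
  by_cases hm : m = 0
  · subst hm; simp
  · have h1 : coeff m p = 0 := by
      apply hp.coeff_eq_zero
      intro hd
      apply hm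
      ext x
      by_cases hx : x ∈ m.support
      · exfalso
        have hsum : (∑ i ∈ m.support, m i) = 0 := by simpa [Finsupp.degree_apply] using hd
        exact Finsupp.mem_support_iff.mp hx (Finset.sum_eq_zero_iff.mp hsum x hx)
      · simpa using Finsupp.notMem_support_iff.mp hx
    rw [h1, coeff_C, if_neg (Ne.symm hm)]

/-! ### Ideal-theoretic helpers -/

lemma memK_left {A B : Ideal (R2 k)} {g : R2 k} (hg : g ∈ A) : g ∈ A + B := by
  rw [Ideal.add_eq_sup]
  exact Submodule.mem_sup_left hg

lemma memK_right {A B : Ideal (R2 k)} {g : R2 k} (hg : g ∈ B) : g ∈ A + B := by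
  rw [Ideal.add_eq_sup]
  exact Submodule.mem_sup_right hg

lemma sum_homogIdeal {A B : Ideal (R2 k)} (hA : IsHomogeneousIdeal A)
    (hB : IsHomogeneousIdeal B) : IsHomogeneousIdeal (A + B) := by
  intro p hp d
  rw [Ideal.add_eq_sup] at hp
  obtain ⟨i, hi, j, hj, rfl⟩ := Submodule.mem_sup.mp hp
  rw [map_add]
  exact add_mem (memK_left (hA i hi d)) (memK_right (hB j hj d))

lemma decomp {A B : Ideal (R2 k)} (hA : IsHomogeneousIdeal A) (hB : IsHomogeneousIdeal B)
    {p : R2 k} {m : ℕ} (hp : p ∈ A + B) (hpm : p.IsHomogeneous m) :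
    ∃ i j, i ∈ A ∧ j ∈ B ∧ i.IsHomogeneous m ∧ j.IsHomogeneous m ∧ p = i + j := by
  rw [Ideal.add_eq_sup] at hp
  obtain ⟨i, hi, j, hj, hij⟩ := Submodule.mem_sup.mp hp
  refine ⟨homogeneousComponent m i, homogeneousComponent m j, hA i hi m, hB j hj m,
    homogeneousComponent_isHomogeneous m i, homogeneousComponent_isHomogeneous m j, ?_⟩
  calc p = homogeneousComponent m p := (comp_of_homog hpm).symm
    _ = _ := by rw [← hij, map_add]

lemma full_colon {K : Ideal (R2 k)} {z : R2 k}
    (hcolon : Submodule.colon K (Ideal.span {z}) = Submodule.colon K (maxIdeal k))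
    {v : R2 k} (hv : z * v ∈ K) : X 0 * v ∈ K ∧ X 1 * v ∈ K := by
  have hvc : v ∈ Submodule.colon K (Ideal.span {z}) := by
    rw [Submodule.mem_colon]
    intro p hp
    obtain ⟨a, rfl⟩ := Ideal.mem_span_singleton'.mp hp
    rw [smul_eq_mul]
    have : v * (a * z) = a * (z * v) := by ring
    rw [this]
    exact Ideal.mul_mem_left K a hv
  rw [hcolon, Submodule.mem_colon] at hvc
  constructor
  · have := hvc (X 0) (Ideal.subset_span (Set.mem_insert _ _))
    rwa [smul_eq_mul, mul_comm] at this
  · have := hvc (X 1) (Ideal.subset_span (Set.mem_insert_of_mem _ rfl))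
    rwa [smul_eq_mul, mul_comm] at this

lemma ordSet_nonempty {I : Ideal (R2 k)} (hI0 : I ≠ ⊥) (hIhom : IsHomogeneousIdeal I) :
    {d : ℕ | ∃ p ∈ I, p ≠ 0 ∧ MvPolynomial.IsHomogeneous p d}.Nonempty := by
  obtain ⟨p, hpI, hp0⟩ := (Submodule.ne_bot_iff I).mp hI0
  have : ∃ d, homogeneousComponent d p ≠ 0 := by
    by_contra hall
    push_neg at hall
    apply hp0
    conv_lhs => rw [← p.sum_homogeneousComponent]
    exact Finset.sum_eq_zero (fun i _ => hall i)
  obtain ⟨d, hd⟩ := this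
  exact ⟨d, homogeneousComponent d p, hIhom p hpI d, hd,
    homogeneousComponent_isHomogeneous d p⟩

lemma ordDeg_witness {I : Ideal (R2 k)} (hI0 : I ≠ ⊥) (hIhom : IsHomogeneousIdeal I) :
    ∃ p ∈ I, p ≠ 0 ∧ MvPolynomial.IsHomogeneous p (ordDeg I) :=
  Nat.sInf_mem (ordSet_nonempty hI0 hIhom)

lemma ordDeg_le {I : Ideal (R2 k)} {p : R2 k} (hp : p ∈ I) (hp0 : p ≠ 0) {d : ℕ}
    (hph : p.IsHomogeneous d) : ordDeg I ≤ d :=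
  Nat.sInf_le ⟨p, hp, hp0, hph⟩

/-! ### The decomposition lemma ("cross") -/

lemma cross {A B : Ideal (R2 k)} {n : ℕ}
    (hvan : ∀ p ∈ A ⊓ B, p.IsHomogeneous (n + 2) → p = 0)
    {p₁ p₂ q₁ q₂ v : R2 k}
    (hp₁A : p₁ ∈ A) (hp₂A : p₂ ∈ A) (hq₁B : q₁ ∈ B) (hq₂B : q₂ ∈ B)
    (hp₁ : p₁.IsHomogeneous (n + 1)) (hp₂ : p₂.IsHomogeneous (n + 1))
    (h0 : X 0 * v = p₁ + q₁) (h1 : X 1 * v = p₂ + q₂) :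
    ∃ r s, p₁ = X 0 * r ∧ p₂ = X 1 * r ∧ q₁ = X 0 * s ∧ q₂ = X 1 * s ∧ v = r + s := by
  have e : X 1 * p₁ - X 0 * p₂ = X 0 * q₂ - X 1 * q₁ := by
    linear_combination (-(X (1:Fin 2) : R2 k)) * h0 + (X (0:Fin 2) : R2 k) * h1
  have hhom : (X 1 * p₁ - X 0 * p₂ : R2 k).IsHomogeneous (n + 2) := by
    have h12 : (1:ℕ) + (n+1) = n + 2 := by omega
    exact h12 ▸ (((isHomogeneous_X _ _).mul hp₁).sub ((isHomogeneous_X _ _).mul hp₂))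
  have hmem : X 1 * p₁ - X 0 * p₂ ∈ A ⊓ B := by
    refine Submodule.mem_inf.mpr ⟨?_, ?_⟩
    · exact sub_mem (Ideal.mul_mem_left _ _ hp₁A) (Ideal.mul_mem_left _ _ hp₂A)
    · rw [e]
      exact sub_mem (Ideal.mul_mem_left _ _ hq₂B) (Ideal.mul_mem_left _ _ hq₁B)
  have key := hvan _ hmem hhom
  have keyp : X 1 * p₁ = X 0 * p₂ := sub_eq_zero.mp key
  have keyq : X 0 * q₂ = X 1 * q₁ := by
    have := e.symm.trans key
    linear_combination this
  obtain ⟨r, hr⟩ : (X 0 : R2 k) ∣ p₁ := by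
    rcases prime_X0.dvd_mul.mp ⟨p₂, keyp⟩ with h | h
    · exact absurd h X0_not_dvd_X1
    · exact h
  have hp₂r : p₂ = X 1 * r := by
    apply mul_left_cancel₀ (X_ne_zero (0 : Fin 2))
    rw [← keyp, hr]
    ring
  obtain ⟨s, hs⟩ : (X 0 : R2 k) ∣ q₁ := by
    have hq : (X 0 : R2 k) ∣ X 1 * q₁ := ⟨q₂, keyq.symm⟩
    rcases prime_X0.dvd_mul.mp hq with h | h
    · exact absurd h X0_not_dvd_X1
    · exact h
  have hq₂s : q₂ = X 1 * s := by
    apply mul_left_cancel₀ (X_ne_zero (0 : Fin 2))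
    rw [keyq, hs]
    ring
  have hv : v = r + s := by
    apply mul_left_cancel₀ (X_ne_zero (0 : Fin 2))
    rw [h0, hr, hs]
    ring
  exact ⟨r, s, hr, hp₂r, hs, hq₂s, hv⟩

/-! ### The purity lemma -/

lemma purity {A B : Ideal (R2 k)} (hA : IsHomogeneousIdeal A) (hB : IsHomogeneousIdeal B)
    {z : R2 k} (hz0 : z ≠ 0) (hz1 : z.IsHomogeneous 1)
    (hcolon : Submodule.colon (A + B) (Ideal.span {z}) = Submodule.colon (A + B) (maxIdeal k))
    {n : ℕ}
    (hvan1 : ∀ p ∈ A ⊓ B, p.IsHomogeneous (n + 1) → p = 0)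
    (hvan2 : ∀ p ∈ A ⊓ B, p.IsHomogeneous (n + 2) → p = 0)
    (hpure : ∀ g ∈ A, g.IsHomogeneous (n + 1) → z ∣ g) :
    ∀ (j : ℕ), ∀ g ∈ A, g.IsHomogeneous (n + 1) → z ^ j ∣ g := by
  obtain ⟨α, β, hrep⟩ : ∃ α β, z = C α * X 0 + C β * X 1 := ⟨_, _, linear_form_eq hz1⟩
  intro j
  induction j with
  | zero => intro g _ _; simpa using one_dvd g
  | succ j ih =>
    intro g hg hgh
    obtain ⟨g₁, hg₁⟩ := hpure g hg hgh
    set g' := homogeneousComponent n g₁ with hg'def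
    have hzg' : z * g' = g := by
      rw [hg'def, ← comp_mul hz1, ← hg₁, comp_of_homog hgh]
    have hg'h : g'.IsHomogeneous n := homogeneousComponent_isHomogeneous n g₁
    have hzK : z * g' ∈ A + B := by
      rw [hzg']
      exact memK_left hg
    obtain ⟨hx0, hx1⟩ := full_colon hcolon hzK
    have h1n : (1:ℕ) + n = n + 1 := by omega
    have hX0h : (X 0 * g' : R2 k).IsHomogeneous (n+1) := h1n ▸ (isHomogeneous_X _ _).mul hg'h
    have hX1h : (X 1 * g' : R2 k).IsHomogeneous (n+1) := h1n ▸ (isHomogeneous_X _ _).mul hg'h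
    obtain ⟨p₁, q₁, hp₁A, hq₁B, hp₁h, hq₁h, hdec0⟩ := decomp hA hB hx0 hX0h
    obtain ⟨p₂, q₂, hp₂A, hq₂B, hp₂h, hq₂h, hdec1⟩ := decomp hA hB hx1 hX1h
    obtain ⟨r, s, hr, hp₂r, hs, hq₂s, hv⟩ :=
      cross hvan2 hp₁A hp₂A hq₁B hq₂B hp₁h hp₂h hdec0 hdec1
    have hshom : s.IsHomogeneous n := by
      have h1 : X 0 * homogeneousComponent n s = X 0 * s := by
        rw [← comp_mul (isHomogeneous_X _ _) s n, ← hs, comp_of_homog hq₁h, hs]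
      have h2 : homogeneousComponent n s = s := mul_left_cancel₀ (X_ne_zero _) h1
      rw [← h2]
      exact homogeneousComponent_isHomogeneous n s
    have hzsB : z * s ∈ B := by
      have : z * s = C α * q₁ + C β * q₂ := by rw [hrep, hs, hq₂s]; ring
      rw [this]
      exact add_mem (Ideal.mul_mem_left _ _ hq₁B) (Ideal.mul_mem_left _ _ hq₂B)
    have hzrA : z * r ∈ A := by
      have : z * r = C α * p₁ + C β * p₂ := by rw [hrep, hr, hp₂r]; ring
      rw [this]
      exact add_mem (Ideal.mul_mem_left _ _ hp₁A) (Ideal.mul_mem_left _ _ hp₂A)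
    have hzs_mem : z * s ∈ A ⊓ B := by
      refine Submodule.mem_inf.mpr ⟨?_, hzsB⟩
      have : z * s = g - z * r := by rw [← hzg', hv]; ring
      rw [this]
      exact sub_mem hg hzrA
    have hzsh : (z * s).IsHomogeneous (n + 1) := h1n ▸ hz1.mul hshom
    have hzs0 := hvan1 _ hzs_mem hzsh
    have hs0 : s = 0 := by
      rcases mul_eq_zero.mp hzs0 with h | h
      · exact absurd h hz0
      · exact h
    have hm0 : X 0 * g' = p₁ := by rw [hdec0, hs, hs0, mul_zero, add_zero]
    have hm1 : X 1 * g' = p₂ := by rw [hdec1, hq₂s, hs0, mul_zero, add_zero]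
    have d0 : z ^ j ∣ X 0 * g' := hm0 ▸ ih p₁ hp₁A hp₁h
    have d1 : z ^ j ∣ X 1 * g' := hm1 ▸ ih p₂ hp₂A hp₂h
    have : z ^ j ∣ g' := pow_dvd_cancel (prime_z hz0 hz1) j g' d0 d1
    rw [← hzg', pow_succ']
    exact mul_dvd_mul_left z this

/-! ### Main upper-bound lemma -/

lemma main_aux [Infinite k] (A B : Ideal (R2 k)) (hA0 : A ≠ ⊥) (hB0 : B ≠ ⊥) (hBtop : B ≠ ⊤)
    (hAhom : IsHomogeneousIdeal A) (hBhom : IsHomogeneousIdeal B)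
    (hfull : IsFull (A + B)) (hab : ordDeg A ≤ ordDeg B) :
    ordDeg (A ⊓ B) ≤ ordDeg B + 1 := by
  obtain ⟨z, hz0, hz1, hcolon⟩ := hfull
  obtain ⟨g₀, hg₀B, hg₀0, hg₀h⟩ := ordDeg_witness hB0 hBhom
  obtain ⟨n, hn⟩ : ∃ n, ordDeg B = n + 1 := by
    rcases Nat.eq_zero_or_pos (ordDeg B) with h0 | h0
    · exfalso
      apply hBtop
      rw [h0] at hg₀h
      have hC : g₀ = C (coeff 0 g₀) := homog_zero_eq_C hg₀h
      have hc0 : coeff 0 g₀ ≠ 0 := fun h => hg₀0 (by rw [hC, h, map_zero])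
      exact Ideal.eq_top_of_isUnit_mem B hg₀B
        (hC ▸ (isUnit_iff_ne_zero.mpr hc0).map (C : k →+* R2 k))
    · exact ⟨ordDeg B - 1, by omega⟩
  rw [hn]
  by_contra hcon
  push_neg at hcon
  have hvan : ∀ d, d ≤ n + 2 → ∀ p ∈ A ⊓ B, p.IsHomogeneous d → p = 0 := by
    intro d hd p hp hph
    by_contra hp0
    have := ordDeg_le hp hp0 hph
    omega
  have hvan1 : ∀ p ∈ A ⊓ B, p.IsHomogeneous (n + 1) → p = 0 := hvan (n+1) (by omega)
  have hvan2 : ∀ p ∈ A ⊓ B, p.IsHomogeneous (n + 2) → p = 0 := hvan (n+2) le_rfl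
  -- vanish for B ⊓ A
  have hvan1' : ∀ p ∈ B ⊓ A, p.IsHomogeneous (n + 1) → p = 0 := by
    intro p hp hph
    exact hvan1 p (by rwa [inf_comm] at hp) hph
  have hvan2' : ∀ p ∈ B ⊓ A, p.IsHomogeneous (n + 2) → p = 0 := by
    intro p hp hph
    exact hvan2 p (by rwa [inf_comm] at hp) hph
  have hcolon' : Submodule.colon (B + A) (Ideal.span {z})
      = Submodule.colon (B + A) (maxIdeal k) := by
    rwa [add_comm B A]
  -- a nonzero homogeneous element of A of degree n+1
  obtain ⟨f₀, hf₀A, hf₀0, hf₀h⟩ := ordDeg_witness hA0 hAhom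
  have hf₁ : ∃ f₁ ∈ A, f₁ ≠ 0 ∧ MvPolynomial.IsHomogeneous f₁ (n + 1) := by
    refine ⟨X 0 ^ (n + 1 - ordDeg A) * f₀, Ideal.mul_mem_left _ _ hf₀A,
      mul_ne_zero (pow_ne_zero _ (X_ne_zero _)) hf₀0, ?_⟩
    have h1 := (isHomogeneous_X_pow (R := k) (0 : Fin 2) (n + 1 - ordDeg A)).mul hf₀h
    have heq : (n + 1 - ordDeg A) + ordDeg A = n + 1 := by omega
    rwa [heq] at h1
  obtain ⟨f₁, hf₁A, hf₁0, hf₁h⟩ := hf₁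
  -- obtain f ∈ A of degree n+1 not divisible by z
  have hnpA : ¬ (∀ g ∈ A, g.IsHomogeneous (n+1) → z ∣ g) := by
    intro hpure
    exact deg_bound hf₁0 hf₁h hz0 hz1
      (purity hAhom hBhom hz0 hz1 hcolon hvan1 hvan2 hpure (n+2) f₁ hf₁A hf₁h)
  push_neg at hnpA
  obtain ⟨f, hfA, hfh, hfz⟩ := hnpA
  -- obtain g ∈ B of degree n+1 not divisible by z
  have hg₀h' : MvPolynomial.IsHomogeneous g₀ (n + 1) := hn ▸ hg₀h
  have hnpB : ¬ (∀ g ∈ B, g.IsHomogeneous (n+1) → z ∣ g) := by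
    intro hpure
    exact deg_bound hg₀0 hg₀h' hz0 hz1
      (purity hBhom hAhom hz0 hz1 hcolon' hvan1' hvan2' hpure (n+2) g₀ hg₀B hg₀h')
  push_neg at hnpB
  obtain ⟨g, hgB, hgh, hgz⟩ := hnpB
  -- mix
  obtain ⟨γ, v₀, hmixeq⟩ := mix hz0 hz1 hfh hgh hfz
  have hzv₀ : z * v₀ ∈ A + B := by
    have hrw : z * v₀ = g - C γ * f := by linear_combination -hmixeq
    rw [hrw]
    exact sub_mem (memK_right hgB) (memK_left (Ideal.mul_mem_left _ _ hfA))
  obtain ⟨hx0, hx1⟩ := full_colon hcolon hzv₀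
  set v := homogeneousComponent n v₀ with hvdef
  have hKhom : IsHomogeneousIdeal (A + B) := sum_homogIdeal hAhom hBhom
  have hX0K : X 0 * v ∈ A + B := by
    rw [hvdef, ← comp_mul (isHomogeneous_X _ _) v₀ n]
    exact hKhom _ hx0 (n+1)
  have hX1K : X 1 * v ∈ A + B := by
    rw [hvdef, ← comp_mul (isHomogeneous_X _ _) v₀ n]
    exact hKhom _ hx1 (n+1)
  have hzv : z * v = g - C γ * f := by
    have h1 : z * v₀ = g - C γ * f := by linear_combination -hmixeq
    rw [hvdef, ← comp_mul hz1 v₀ n, h1, comp_of_homog (hgh.sub (hfh.C_mul γ))]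
  have h1n : (1:ℕ) + n = n + 1 := by omega
  have hX0h : (X 0 * v : R2 k).IsHomogeneous (n+1) :=
    h1n ▸ (isHomogeneous_X _ _).mul (homogeneousComponent_isHomogeneous n v₀)
  have hX1h : (X 1 * v : R2 k).IsHomogeneous (n+1) :=
    h1n ▸ (isHomogeneous_X _ _).mul (homogeneousComponent_isHomogeneous n v₀)
  obtain ⟨p₁, q₁, hp₁A, hq₁B, hp₁h, hq₁h, hdec0⟩ := decomp hAhom hBhom hX0K hX0h
  obtain ⟨p₂, q₂, hp₂A, hq₂B, hp₂h, hq₂h, hdec1⟩ := decomp hAhom hBhom hX1K hX1h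
  obtain ⟨r, s, hr, hp₂r, hs, hq₂s, hv⟩ :=
    cross hvan2 hp₁A hp₂A hq₁B hq₂B hp₁h hp₂h hdec0 hdec1
  obtain ⟨α, β, hrep⟩ : ∃ α β, z = C α * X 0 + C β * X 1 := ⟨_, _, linear_form_eq hz1⟩
  have hzrA : z * r ∈ A := by
    have : z * r = C α * p₁ + C β * p₂ := by rw [hrep, hr, hp₂r]; ring
    rw [this]
    exact add_mem (Ideal.mul_mem_left _ _ hp₁A) (Ideal.mul_mem_left _ _ hp₂A)
  have hzsB : z * s ∈ B := by
    have : z * s = C α * q₁ + C β * q₂ := by rw [hrep, hs, hq₂s]; ring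
    rw [this]
    exact add_mem (Ideal.mul_mem_left _ _ hq₁B) (Ideal.mul_mem_left _ _ hq₂B)
  have hshom : s.IsHomogeneous n := by
    have hcs : X 0 * homogeneousComponent n s = X 0 * s := by
      rw [← comp_mul (isHomogeneous_X _ _) s n, ← hs, comp_of_homog hq₁h, hs]
    have h2 : homogeneousComponent n s = s := mul_left_cancel₀ (X_ne_zero _) hcs
    rw [← h2]
    exact homogeneousComponent_isHomogeneous n s
  have hmem : g - z * s ∈ A ⊓ B := by
    refine Submodule.mem_inf.mpr ⟨?_, sub_mem hgB hzsB⟩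
    have : g - z * s = z * r + C γ * f := by
      have h2 : z * (r + s) = g - C γ * f := by rw [← hv]; exact hzv
      linear_combination -h2
    rw [this]
    exact add_mem hzrA (Ideal.mul_mem_left _ _ hfA)
  have hhomgs : (g - z * s).IsHomogeneous (n + 1) := hgh.sub (h1n ▸ hz1.mul hshom)
  have hfinal := hvan1 _ hmem hhomgs
  apply hgz
  exact ⟨s, by linear_combination hfinal⟩

end OrderFullProof

open OrderFullProof in
theorem order_of_intersection_of_full_sum {k : Type*} [Field k] [Infinite k]
    (I J : Ideal (MvPolynomial (Fin 2) k))
    (hI0 : I ≠ ⊥) (hItop : I ≠ ⊤) (hJ0 : J ≠ ⊥) (hJtop : J ≠ ⊤)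
    (hIhom : IsHomogeneousIdeal I) (hJhom : IsHomogeneousIdeal J)
    (hfull : IsFull (I + J)) :
    max (ordDeg I) (ordDeg J) ≤ ordDeg (I ⊓ J) ∧
      ordDeg (I ⊓ J) ≤ max (ordDeg I) (ordDeg J) + 1 := by
  constructor
  · -- lower bound
    obtain ⟨f₀, hf₀I, hf₀0, hf₀h⟩ := ordDeg_witness hI0 hIhom
    obtain ⟨g₀, hg₀J, hg₀0, hg₀h⟩ := ordDeg_witness hJ0 hJhom
    have hne : {d : ℕ | ∃ p ∈ I ⊓ J, p ≠ 0 ∧ MvPolynomial.IsHomogeneous p d}.Nonempty := by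
      refine ⟨ordDeg I + ordDeg J, f₀ * g₀, ?_, mul_ne_zero hf₀0 hg₀0, hf₀h.mul hg₀h⟩
      exact Submodule.mem_inf.mpr ⟨Ideal.mul_mem_right _ _ hf₀I, Ideal.mul_mem_left _ _ hg₀J⟩
    obtain ⟨p, hpIJ, hp0, hph⟩ := Nat.sInf_mem hne
    obtain ⟨hpI, hpJ⟩ := Submodule.mem_inf.mp hpIJ
    exact max_le (ordDeg_le hpI hp0 hph) (ordDeg_le hpJ hp0 hph)
  · -- upper bound
    rcases le_total (ordDeg I) (ordDeg J) with h | h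
    · rw [max_eq_right h]
      exact main_aux I J hI0 hJ0 hJtop hIhom hJhom hfull h
    · rw [max_eq_left h]
      have h1 : I ⊓ J = J ⊓ I := inf_comm I J
      have h2 : I + J = J + I := add_comm I J
      rw [h1]
      exact main_aux J I hJ0 hI0 hItop hJhom hIhom (h2 ▸ hfull) h

end
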